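/- Let A be a commutative ring that is torsion-free as an abelian group (flat over ℤ), and assume the Frobenius endomorphism x ↦ x^p of A/pA is bijective. Then there is a well-defined map w : A → A/pA satisfying w(a^p + p·b) = b^p mod pA for all a, b ∈ A (every element of A is of this form), and this map w is an FW-derivation, where A/pA is regarded as an A-module via the quotient map. -/

import Mathlib

open scoped TensorProduct

/-- The integer coefficient `(p-1)!/(i!(p-i)!) = C(p,i)/p` appearing in the polynomial `P`. -/
def fwCoeff (p i : ℕ) : ℕ := p.choose i / p

/-- The polynomial `P(a,b) = Σ_{i=1}^{p-1} ((p-1)!/(i!(p-i)!)) a^i b^{p-i}`,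
so that `p · P(a,b) = (a+b)^p - a^p - b^p`. -/
def fwP (p : ℕ) {A : Type*} [CommRing A] (a b : A) : A :=
  ∑ i ∈ Finset.Ioo 0 p, fwCoeff p i • (a ^ i * b ^ (p - i))

/-- A Frobenius–Witt derivation: `w(a+b) = w(a) + w(b) - P(a,b)·w(p·1)` and
`w(ab) = b^p·w(a) + a^p·w(b)`. -/
def IsFWDeriv (p : ℕ) {A M : Type*} [CommRing A] [AddCommGroup M] [Module A M]
    (w : A → M) : Prop :=
  (∀ a b : A, w (a + b) = w a + w b - fwP p a b • w (p : A)) ∧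
  (∀ a b : A, w (a * b) = b ^ p • w a + a ^ p • w b)

private lemma fwP_key {A : Type*} [CommRing A] {p : ℕ} (hp : p.Prime) (x y : A) :
    (x + y) ^ p = x ^ p + y ^ p + p * fwP p x y := by
  rw [add_pow_prime_eq hp, fwP]
  congr 1
  rw [mul_assoc, mul_assoc]
  congr 1
  rw [← mul_assoc, Finset.mul_sum]
  refine Finset.sum_congr rfl fun i hi => ?_
  rw [Finset.mem_Ioo] at hi
  obtain ⟨j, rfl⟩ : ∃ j, i = j + 1 := ⟨i - 1, by omega⟩
  obtain ⟨k, hk⟩ : ∃ k, p - (j + 1) = k + 1 := ⟨p - (j + 1) - 1, by omega⟩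
  rw [show p - (j + 1) - 1 = k by omega, hk, Nat.add_sub_cancel, fwCoeff, nsmul_eq_mul]; ring

private lemma map_fwP {A B : Type*} [CommRing A] [CommRing B] (ψ : A →+* B) (p : ℕ) (a b : A) :
    ψ (fwP p a b) = fwP p (ψ a) (ψ b) := by
  simp [fwP, map_sum, map_nsmul, map_mul, map_pow]

section frob
variable {R : Type*} [CommRing R] {p : ℕ} (hp : p.Prime) (h0 : ((p : ℕ) : R) = 0)
include hp h0

private lemma frob_add (u v : R) : (u + v) ^ p = u ^ p + v ^ p := by
  rw [fwP_key hp, h0, zero_mul, add_zero]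

private lemma frob_natCast (c : ℕ) : ((c : ℕ) : R) ^ p = c := by
  induction c with
  | zero => simpa using zero_pow hp.ne_zero
  | succ n ih => push_cast; rw [frob_add hp h0, ih, one_pow]

private lemma frob_neg (u : R) : (-u) ^ p = -(u ^ p) := by
  have h : u ^ p + (-u) ^ p = 0 := by
    rw [← frob_add hp h0]; simp [zero_pow hp.ne_zero]
  exact eq_neg_of_add_eq_zero_right h

private lemma frob_sub (u v : R) : (u - v) ^ p = u ^ p - v ^ p := by
  rw [sub_eq_add_neg, frob_add hp h0, frob_neg hp h0, ← sub_eq_add_neg]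

private lemma frob_sum {ι : Type*} (s : Finset ι) (f : ι → R) :
    (∑ i ∈ s, f i) ^ p = ∑ i ∈ s, (f i) ^ p := by
  classical
  induction s using Finset.induction with
  | empty => simp [zero_pow hp.ne_zero]
  | @insert a s h ih => rw [Finset.sum_insert h, frob_add hp h0, ih, Finset.sum_insert h]

private lemma frob_fwP (u v : R) : (fwP p u v) ^ p = fwP p (u ^ p) (v ^ p) := by
  rw [fwP, frob_sum hp h0, fwP]
  refine Finset.sum_congr rfl fun i _ => ?_
  rw [smul_pow, mul_pow, ← pow_mul, ← pow_mul, mul_comm i p, mul_comm (p - i) p,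
    pow_mul, pow_mul, nsmul_eq_mul, nsmul_eq_mul, Nat.cast_pow, frob_natCast hp h0]

end frob

theorem fw_witt_deriv {A : Type*} [CommRing A]
    (p : ℕ) (hp : p.Prime)
    (htf : ∀ (n : ℤ) (a : A), n ≠ 0 → n • a = 0 → a = 0)
    (hF : Function.Bijective fun x : A ⧸ Ideal.span {(p : A)} => x ^ p) :
    (∀ r : A, ∃ a b : A, r = a ^ p + p * b) ∧
    ∃ w : A → A ⧸ Ideal.span {(p : A)},
      (∀ a b : A, w (a ^ p + p * b) = (Ideal.Quotient.mk (Ideal.span {(p : A)}) b) ^ p) ∧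
      IsFWDeriv p w := by
  set I : Ideal A := Ideal.span {(p : A)} with hI
  set φ : A →+* A ⧸ I := Ideal.Quotient.mk I with hφ
  have h0 : ((p : ℕ) : A ⧸ I) = 0 := by
    rw [← map_natCast φ p]
    exact Ideal.Quotient.eq_zero_iff_mem.mpr (Ideal.mem_span_singleton_self _)
  -- cancellation by p
  have hcancel : ∀ x y : A, (p : A) * x = (p : A) * y → x = y := by
    intro x y h
    have h1 : ((p : ℤ) : ℤ) • (x - y) = 0 := by
      rw [zsmul_eq_mul]
      push_cast
      linear_combination h
    have := htf (p : ℤ) (x - y) (by exact_mod_cast hp.ne_zero) h1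
    linear_combination this
  -- surjectivity of r ↦ decomposition
  have hsurj : ∀ r : A, ∃ a b : A, r = a ^ p + p * b := by
    intro r
    obtain ⟨u, hu⟩ := hF.2 (φ r)
    obtain ⟨a, rfl⟩ := Ideal.Quotient.mk_surjective u
    have hmem : r - a ^ p ∈ I := by
      rw [← Ideal.Quotient.eq_zero_iff_mem]
      have : φ (a ^ p) = φ r := by simpa [map_pow] using hu
      rw [map_sub, this, sub_self]
    obtain ⟨b, hb⟩ := Ideal.mem_span_singleton.mp hmem
    exact ⟨a, b, by linear_combination hb⟩
  refine ⟨hsurj, ?_⟩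
  -- well-definedness
  have hwd : ∀ a b a' b' : A, a ^ p + p * b = a' ^ p + p * b' → φ b ^ p = φ b' ^ p := by
    intro a b a' b' h
    have h1 : φ a ^ p = φ a' ^ p := by
      have := congrArg φ h
      simpa [map_add, map_mul, map_pow, h0] using this
    have h2 : φ a = φ a' := hF.1 h1
    have h3 : a - a' ∈ I := Ideal.Quotient.eq.mp h2
    obtain ⟨c, hc⟩ := Ideal.mem_span_singleton.mp (I.neg_mem h3)
    have ha' : a' = a + (p : A) * c := by linear_combination hc
    rw [ha'] at h
    have hb := fwP_key hp a ((p : A) * c)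
    have hdvd : (p : A) ∣ fwP p a ((p : A) * c) := by
      rw [fwP]
      refine Finset.dvd_sum fun i hi => ?_
      rw [nsmul_eq_mul]
      have hlt : p - i ≠ 0 := by rw [Finset.mem_Ioo] at hi; omega
      exact ((dvd_pow (dvd_mul_right _ c) hlt).mul_left (a ^ i)).mul_left _
    obtain ⟨e, he⟩ := hdvd
    have hpow : (p : A) ^ p = (p : A) * ((p : A) * (p : A) ^ (p - 2)) := by
      rw [← pow_succ', ← pow_succ']
      congr 1
      have := hp.two_le
      omega
    have key : (p : A) * b = (p : A) * (b' + (p : A) * ((p : A) ^ (p - 2) * c ^ p + e)) := by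
      linear_combination h + hb + (p : A) * he + c ^ p * hpow
    have hbb : b = b' + (p : A) * ((p : A) ^ (p - 2) * c ^ p + e) := hcancel _ _ key
    have : φ b = φ b' := by
      rw [hbb]
      simp [map_add, map_mul, h0]
    rw [this]
  choose f g hfg using hsurj
  set w : A → A ⧸ I := fun r => φ (g r) ^ p with hw_def
  have hw : ∀ a b : A, w (a ^ p + p * b) = φ b ^ p := fun a b =>
    hwd (f _) (g _) a b (hfg _).symm
  have hw' : ∀ (r a b : A), r = a ^ p + p * b → w r = φ b ^ p := by
    intro r a b h; rw [h]; exact hw a b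
  have hmk : ∀ r : A, φ (f r) ^ p = φ r := by
    intro r
    conv_rhs => rw [hfg r]
    simp [map_add, map_mul, map_pow, h0]
  have hsmul : ∀ (z : A) (u : A ⧸ I), z • u = φ z * u := fun z u => rfl
  refine ⟨w, hw, ?_, ?_⟩
  · -- additivity
    intro x y
    have hxy : x + y = (f x + f y) ^ p + (p : A) * (g x + g y - fwP p (f x) (f y)) := by
      rw [fwP_key hp]
      linear_combination hfg x + hfg y
    rw [hw' _ _ _ hxy]
    have hwp : w (p : A) = 1 := by
      have : ((p : ℕ) : A) = 0 ^ p + (p : A) * 1 := by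
        rw [zero_pow hp.ne_zero, mul_one, zero_add]
      rw [hw' _ _ _ this, map_one, one_pow]
    rw [hwp, hsmul, mul_one, map_fwP φ p x y, ← hmk x, ← hmk y, ← frob_fwP hp h0,
      ← map_fwP φ, map_sub, map_add, frob_sub hp h0, frob_add hp h0]
  · -- multiplicativity
    intro x y
    have hxy : x * y = (f x * f y) ^ p
        + (p : A) * ((f x) ^ p * g y + (f y) ^ p * g x + (p : A) * (g x * g y)) := by
      linear_combination y * hfg x + (f x) ^ p * hfg y + (p : A) * g x * hfg y
    rw [hw' _ _ _ hxy]
    rw [map_add, map_add, frob_add hp h0, frob_add hp h0]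
    have h3 : φ ((p : A) * (g x * g y)) ^ p = 0 := by
      rw [map_mul, map_natCast, h0, zero_mul, zero_pow hp.ne_zero]
    rw [h3, add_zero, map_mul, map_mul, map_pow, map_pow, hmk x, hmk y,
      hsmul, hsmul, mul_pow, mul_pow, map_pow, map_pow, hw_def]
    ring
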